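/- Let φ₀, φ₁ be real numbers with δ = φ₁ − φ₀ > 0, let h(A) = X(2A, δ−A, φ₀), and for A > 0 set θ = (δ−A)²/(4A). If 0 < A ≤ δ then 2√A · h(A) = p̄(θ), and if A ≥ δ then 2√A · h(A) = q̄(θ). -/

import Mathlib

open Real

/-- `X a b c = ∫₀¹ cos(a τ²/2 + b τ + c) dτ` -/
noncomputable def X (a b c : ℝ) : ℝ := ∫ τ in (0:ℝ)..1, Real.cos (a * τ ^ 2 / 2 + b * τ + c)

/-- `pbar φ₀ δ θ = ∫_θ^{θ+δ} cos(u + φ₀ - θ)/√u du` -/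
noncomputable def pbar (φ₀ δ θ : ℝ) : ℝ := ∫ u in θ..(θ + δ), Real.cos (u + φ₀ - θ) / Real.sqrt u

/-- `qbar φ₀ δ θ = pbar φ₀ δ θ + 2 ∫₀^θ cos(u + φ₀ - θ)/√u du` -/
noncomputable def qbar (φ₀ δ θ : ℝ) : ℝ :=
  pbar φ₀ δ θ + 2 * ∫ u in (0:ℝ)..θ, Real.cos (u + φ₀ - θ) / Real.sqrt u

open MeasureTheory Set intervalIntegral

private lemma hasDeriv_f (A c : ℝ) (s : Set ℝ) (x : ℝ) :
    HasDerivWithinAt (fun τ => A * (τ + c) ^ 2) (2 * A * (x + c)) s x := by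
  have h := ((((hasDerivAt_id x).add_const c).pow 2).const_mul A).hasDerivWithinAt (s := s)
  exact h.congr_deriv (by simp only [id_eq]; ring)

private lemma smo_pos {A c a b : ℝ} (hA : 0 < A) (hac : 0 ≤ a + c) :
    StrictMonoOn (fun τ => A * (τ + c) ^ 2) (Set.Icc a b) := by
  intro x hx y hy hxy
  have hx' : 0 ≤ x + c := by linarith [hx.1]
  have : (x + c) ^ 2 < (y + c) ^ 2 := by nlinarith
  exact mul_lt_mul_of_pos_left this hA

private lemma smo_neg {A c a b : ℝ} (hA : 0 < A) (hbc : b + c ≤ 0) :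
    StrictAntiOn (fun τ => A * (τ + c) ^ 2) (Set.Icc a b) := by
  intro x hx y hy hxy
  have hy' : y + c ≤ 0 := by linarith [hy.2]
  have : (y + c) ^ 2 < (x + c) ^ 2 := by nlinarith
  exact mul_lt_mul_of_pos_left this hA

private lemma cont_f (A c : ℝ) : Continuous (fun τ : ℝ => A * (τ + c) ^ 2) := by fun_prop

private lemma image_pos {A c a b : ℝ} (hA : 0 < A) (hab : a ≤ b) (hac : 0 ≤ a + c) :
    (fun τ => A * (τ + c) ^ 2) '' Set.Ioo a b
      = Set.Ioo (A * (a + c) ^ 2) (A * (b + c) ^ 2) := by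
  apply Set.Subset.antisymm
  · rintro _ ⟨x, hx, rfl⟩
    exact ⟨smo_pos hA hac (Set.left_mem_Icc.2 hab) (Set.Ioo_subset_Icc_self hx) hx.1,
           smo_pos hA hac (Set.Ioo_subset_Icc_self hx) (Set.right_mem_Icc.2 hab) hx.2⟩
  · exact intermediate_value_Ioo hab (cont_f A c).continuousOn

private lemma image_neg {A c a b : ℝ} (hA : 0 < A) (hab : a ≤ b) (hbc : b + c ≤ 0) :
    (fun τ => A * (τ + c) ^ 2) '' Set.Ioo a b
      = Set.Ioo (A * (b + c) ^ 2) (A * (a + c) ^ 2) := by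
  apply Set.Subset.antisymm
  · rintro _ ⟨x, hx, rfl⟩
    exact ⟨smo_neg hA hbc (Set.Ioo_subset_Icc_self hx) (Set.right_mem_Icc.2 hab) hx.2,
           smo_neg hA hbc (Set.left_mem_Icc.2 hab) (Set.Ioo_subset_Icc_self hx) hx.1⟩
  · exact intermediate_value_Ioo' hab (cont_f A c).continuousOn

private lemma aux_mul {A : ℝ} (hA : 0 < A) {y : ℝ} (hy : 0 < y) (r : ℝ) :
    2 * A * y * (r / (Real.sqrt A * y)) = 2 * Real.sqrt A * r := by
  have hsA : (0:ℝ) < Real.sqrt A := Real.sqrt_pos.2 hA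
  field_simp
  linear_combination (-1) * r * Real.mul_self_sqrt hA.le

private lemma ptwise_pos {A c φ θ a b : ℝ} (hA : 0 < A) (hac : 0 ≤ a + c) :
    Set.EqOn (fun x => |2 * A * (x + c)| •
        (Real.cos (A * (x + c) ^ 2 + φ - θ) / Real.sqrt (A * (x + c) ^ 2)))
      (fun τ => 2 * Real.sqrt A * Real.cos (A * (τ + c) ^ 2 + φ - θ)) (Set.Ioo a b) := by
  intro x hx
  have hxc : 0 < x + c := by linarith [hx.1]
  have hsq : Real.sqrt (A * (x + c) ^ 2) = Real.sqrt A * (x + c) := by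
    rw [Real.sqrt_mul hA.le, Real.sqrt_sq hxc.le]
  have hsA : (0:ℝ) < Real.sqrt A := Real.sqrt_pos.2 hA
  simp only [smul_eq_mul, hsq, abs_of_pos (by positivity : (0:ℝ) < 2 * A * (x + c))]
  exact aux_mul hA hxc _

private lemma ptwise_neg {A c φ θ a b : ℝ} (hA : 0 < A) (hbc : b + c ≤ 0) :
    Set.EqOn (fun x => |2 * A * (x + c)| •
        (Real.cos (A * (x + c) ^ 2 + φ - θ) / Real.sqrt (A * (x + c) ^ 2)))
      (fun τ => 2 * Real.sqrt A * Real.cos (A * (τ + c) ^ 2 + φ - θ)) (Set.Ioo a b) := by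
  intro x hx
  have hxc : x + c < 0 := by linarith [hx.2]
  have hsq : Real.sqrt (A * (x + c) ^ 2) = Real.sqrt A * (-(x + c)) := by
    rw [Real.sqrt_mul hA.le, Real.sqrt_sq_eq_abs, abs_of_neg hxc]
  have hsA : (0:ℝ) < Real.sqrt A := Real.sqrt_pos.2 hA
  simp only [smul_eq_mul, hsq, abs_of_neg (by nlinarith : 2 * A * (x + c) < 0)]
  have h2 : -(2 * A * (x + c)) = 2 * A * (-(x + c)) := by ring
  rw [h2, aux_mul hA (by linarith) _]

private lemma key_pos {A c a b : ℝ} (φ θ : ℝ) (hA : 0 < A) (hab : a ≤ b) (hac : 0 ≤ a + c) :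
    ∫ u in Set.Ioo (A * (a + c) ^ 2) (A * (b + c) ^ 2), Real.cos (u + φ - θ) / Real.sqrt u
      = ∫ τ in Set.Ioo a b, 2 * Real.sqrt A * Real.cos (A * (τ + c) ^ 2 + φ - θ) := by
  rw [← image_pos hA hab hac,
    integral_image_eq_integral_abs_deriv_smul measurableSet_Ioo
      (fun x _ => hasDeriv_f A c _ x)
      ((smo_pos hA hac).injOn.mono Set.Ioo_subset_Icc_self)
      (fun u => Real.cos (u + φ - θ) / Real.sqrt u)]
  exact setIntegral_congr_fun measurableSet_Ioo (ptwise_pos hA hac)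

private lemma key_neg {A c a b : ℝ} (φ θ : ℝ) (hA : 0 < A) (hab : a ≤ b) (hbc : b + c ≤ 0) :
    ∫ u in Set.Ioo (A * (b + c) ^ 2) (A * (a + c) ^ 2), Real.cos (u + φ - θ) / Real.sqrt u
      = ∫ τ in Set.Ioo a b, 2 * Real.sqrt A * Real.cos (A * (τ + c) ^ 2 + φ - θ) := by
  rw [← image_neg hA hab hbc,
    integral_image_eq_integral_abs_deriv_smul measurableSet_Ioo
      (fun x _ => hasDeriv_f A c _ x)
      ((smo_neg hA hbc).injOn.mono Set.Ioo_subset_Icc_self)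
      (fun u => Real.cos (u + φ - θ) / Real.sqrt u)]
  exact setIntegral_congr_fun measurableSet_Ioo (ptwise_neg hA hbc)

private lemma int_pos {A c a b : ℝ} (φ θ : ℝ) (hA : 0 < A) (hab : a ≤ b) (hac : 0 ≤ a + c) :
    IntegrableOn (fun u => Real.cos (u + φ - θ) / Real.sqrt u)
      (Set.Ioo (A * (a + c) ^ 2) (A * (b + c) ^ 2)) := by
  rw [← image_pos hA hab hac,
    integrableOn_image_iff_integrableOn_abs_deriv_smul measurableSet_Ioo
      (fun x _ => hasDeriv_f A c _ x)
      ((smo_pos hA hac).injOn.mono Set.Ioo_subset_Icc_self)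
      (fun u => Real.cos (u + φ - θ) / Real.sqrt u)]
  have hcont : Continuous (fun τ : ℝ => 2 * Real.sqrt A * Real.cos (A * (τ + c) ^ 2 + φ - θ)) := by
    fun_prop
  exact (hcont.integrableOn_Ioc.mono_set Set.Ioo_subset_Ioc_self).congr_fun
    (fun x hx => ((ptwise_pos hA hac) hx).symm) measurableSet_Ioo

theorem stmt2 (φ₀ φ₁ δ : ℝ) (hδdef : δ = φ₁ - φ₀) (hδ : 0 < δ)
    (A : ℝ) (hA : 0 < A) (θ : ℝ) (hθ : θ = (δ - A) ^ 2 / (4 * A)) :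
    (A ≤ δ → 2 * Real.sqrt A * X (2 * A) (δ - A) φ₀ = pbar φ₀ δ θ) ∧
    (δ ≤ A → 2 * Real.sqrt A * X (2 * A) (δ - A) φ₀ = qbar φ₀ δ θ) := by
  set c : ℝ := (δ - A) / (2 * A) with hc
  have hA' : A ≠ 0 := hA.ne'
  have hθc : θ = A * c ^ 2 := by rw [hθ, hc]; field_simp; ring
  have hθ0 : 0 ≤ θ := by rw [hθc]; positivity
  have hθδ : θ + δ = A * (1 + c) ^ 2 := by rw [hθ, hc]; field_simp; ring
  have hcont : Continuous (fun τ : ℝ => 2 * Real.sqrt A * Real.cos (A * (τ + c) ^ 2 + φ₀ - θ)) := by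
    fun_prop
  have hX : 2 * Real.sqrt A * X (2 * A) (δ - A) φ₀
      = ∫ τ in Set.Ioo (0:ℝ) 1, 2 * Real.sqrt A * Real.cos (A * (τ + c) ^ 2 + φ₀ - θ) := by
    rw [X, ← intervalIntegral.integral_const_mul,
      intervalIntegral.integral_of_le (by norm_num : (0:ℝ) ≤ 1),
      MeasureTheory.integral_Ioc_eq_integral_Ioo]
    refine setIntegral_congr_fun measurableSet_Ioo fun τ _ => ?_
    have harg : 2 * A * τ ^ 2 / 2 + (δ - A) * τ + φ₀ = A * (τ + c) ^ 2 + φ₀ - θ := by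
      rw [hθc, hc]
      field_simp
      ring
    rw [harg]
  constructor
  · intro hAδ
    have hc0 : 0 ≤ (0:ℝ) + c := by
      rw [zero_add, hc]
      exact div_nonneg (by linarith) (by linarith)
    have key := key_pos (A := A) (c := c) φ₀ θ hA (by norm_num : (0:ℝ) ≤ 1) hc0
    have e1 : A * ((0:ℝ) + c) ^ 2 = θ := by rw [hθc]; ring
    have e2 : A * ((1:ℝ) + c) ^ 2 = θ + δ := hθδ.symm
    rw [e1, e2] at key
    rw [hX, ← key, pbar, intervalIntegral.integral_of_le (by linarith : θ ≤ θ + δ),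
      MeasureTheory.integral_Ioc_eq_integral_Ioo]
  · intro hδA
    set m : ℝ := (A - δ) / (2 * A) with hm
    have hmc : m + c = 0 := by rw [hm, hc]; field_simp; ring
    have hm0 : 0 ≤ m := div_nonneg (by linarith) (by linarith)
    have hm1 : m ≤ 1 := by rw [hm, div_le_one (by linarith)]; linarith
    have keyN := key_neg (A := A) (c := c) φ₀ θ hA hm0 hmc.le
    have keyP := key_pos (A := A) (c := c) φ₀ θ hA hm1 hmc.ge
    have e0 : A * (m + c) ^ 2 = 0 := by rw [hmc]; ring
    have e1 : A * ((0:ℝ) + c) ^ 2 = θ := by rw [hθc]; ring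
    have e2 : A * ((1:ℝ) + c) ^ 2 = θ + δ := hθδ.symm
    rw [e0, e1] at keyN
    rw [e0, e2] at keyP
    have hiP : IntegrableOn (fun u => Real.cos (u + φ₀ - θ) / Real.sqrt u)
        (Set.Ioo (0:ℝ) (θ + δ)) := by
      have := int_pos (A := A) (c := c) φ₀ θ hA hm1 hmc.ge
      rwa [e0, e2] at this
    have hi1 : IntervalIntegrable (fun u => Real.cos (u + φ₀ - θ) / Real.sqrt u) volume 0 θ := by
      rw [intervalIntegrable_iff_integrableOn_Ioc_of_le hθ0,
        integrableOn_Ioc_iff_integrableOn_Ioo]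
      exact hiP.mono_set (Set.Ioo_subset_Ioo_right (by linarith))
    have hi2 : IntervalIntegrable (fun u => Real.cos (u + φ₀ - θ) / Real.sqrt u) volume θ
        (θ + δ) := by
      rw [intervalIntegrable_iff_integrableOn_Ioc_of_le (by linarith),
        integrableOn_Ioc_iff_integrableOn_Ioo]
      exact hiP.mono_set (Set.Ioo_subset_Ioo_left hθ0)
    have hsplit := intervalIntegral.integral_add_adjacent_intervals (a := (0:ℝ)) (b := m)
      (c := 1) (f := fun τ => 2 * Real.sqrt A * Real.cos (A * (τ + c) ^ 2 + φ₀ - θ))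
      (hcont.intervalIntegrable (μ := volume) _ _) (hcont.intervalIntegrable (μ := volume) _ _)
    rw [intervalIntegral.integral_of_le hm0, intervalIntegral.integral_of_le hm1,
      intervalIntegral.integral_of_le (by norm_num : (0:ℝ) ≤ 1),
      MeasureTheory.integral_Ioc_eq_integral_Ioo, MeasureTheory.integral_Ioc_eq_integral_Ioo,
      MeasureTheory.integral_Ioc_eq_integral_Ioo] at hsplit
    have c1 : ∫ u in Set.Ioo (0:ℝ) θ, Real.cos (u + φ₀ - θ) / Real.sqrt u
        = ∫ u in (0:ℝ)..θ, Real.cos (u + φ₀ - θ) / Real.sqrt u := by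
      rw [intervalIntegral.integral_of_le hθ0, MeasureTheory.integral_Ioc_eq_integral_Ioo]
    have c2 : ∫ u in Set.Ioo (0:ℝ) (θ + δ), Real.cos (u + φ₀ - θ) / Real.sqrt u
        = ∫ u in (0:ℝ)..(θ + δ), Real.cos (u + φ₀ - θ) / Real.sqrt u := by
      rw [intervalIntegral.integral_of_le (by linarith), MeasureTheory.integral_Ioc_eq_integral_Ioo]
    have hq := intervalIntegral.integral_add_adjacent_intervals hi1 hi2
    rw [hX, ← hsplit, ← keyN, ← keyP, c1, c2, ← hq, qbar, pbar,
      intervalIntegral.integral_of_le hθ0]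
    ring
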